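/- For every n ≥ 1 and every integer k ≥ 2 there exists an integer m ≥ 1 such that the m-th power of the ideal M_2(A_n) (as a product of two-sided ideals) is contained in M_k(A_n). -/

import Mathlib

/-- Lower central series of an associative unital algebra `R` over `K`, as `K`-submodules:
`lowerCentral K R 1 = ⊤` and, for `i ≥ 1`, `lowerCentral K R (i+1)` is the `K`-linear span of
the brackets `⁅a, l⁆ = a * l - l * a` with `a : R` and `l ∈ lowerCentral K R i`.
(By convention `lowerCentral K R 0 = ⊤` as well; only indices `i ≥ 1` are used.) -/
def lowerCentral (K : Type*) [CommRing K] (R : Type*) [Ring R] [Algebra K R] : ℕ → Submodule K R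
  | 0 => ⊤
  | 1 => ⊤
  | n + 2 => Submodule.span K
      {x : R | ∃ a : R, ∃ l ∈ lowerCentral K R (n + 1), x = a * l - l * a}

/-- `lcsIdeal K R i` is the two-sided ideal `M_i(R)` of `R` generated by `lowerCentral K R i`,
realized as the `K`-submodule spanned by all products `a * l * b` with `a b : R` and
`l ∈ lowerCentral K R i`.  Products of such ideals are taken using the multiplication of
`Submodule K R` (the span of pairwise products), which agrees with the product of
two-sided ideals. -/
def lcsIdeal (K : Type*) [CommRing K] (R : Type*) [Ring R] [Algebra K R] (i : ℕ) : Submodule K R :=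
  Submodule.span K {x : R | ∃ a b : R, ∃ l ∈ lowerCentral K R i, x = a * l * b}

section Basics
variable {K : Type*} [CommRing K] {R : Type*} [Ring R] [Algebra K R]

lemma lc_succ_mem {j : ℕ} (hj : 1 ≤ j) {l : R} (hl : l ∈ lowerCentral K R j) (a : R) :
    a * l - l * a ∈ lowerCentral K R (j + 1) := by
  match j, hj with
  | jj + 1, _ => exact Submodule.subset_span ⟨a, l, hl, rfl⟩

lemma lc_succ_mem' {j : ℕ} (hj : 1 ≤ j) {l : R} (hl : l ∈ lowerCentral K R j) (a : R) :
    l * a - a * l ∈ lowerCentral K R (j + 1) := by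
  have h := (lowerCentral K R (j + 1)).neg_mem (lc_succ_mem hj hl a)
  rwa [neg_sub] at h

lemma lcs_mem {i : ℕ} {l : R} (hl : l ∈ lowerCentral K R i) (a b : R) :
    a * l * b ∈ lcsIdeal K R i :=
  Submodule.subset_span ⟨a, b, l, hl, rfl⟩

lemma lc_le_lcs {i : ℕ} {l : R} (hl : l ∈ lowerCentral K R i) : l ∈ lcsIdeal K R i := by
  have := lcs_mem hl 1 1
  rwa [one_mul, mul_one] at this

lemma lcs_mul_left {i : ℕ} (u : R) {x : R} (hx : x ∈ lcsIdeal K R i) :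
    u * x ∈ lcsIdeal K R i := by
  refine Submodule.span_induction (p := fun x _ => u * x ∈ lcsIdeal K R i) ?_ ?_ ?_ ?_ hx
  · rintro x ⟨a, b, l, hl, rfl⟩
    have : u * (a * l * b) = (u * a) * l * b := by noncomm_ring
    rw [this]; exact lcs_mem hl _ _
  · simp
  · intro x y _ _ hx hy
    rw [mul_add]; exact add_mem hx hy
  · intro r x _ hx
    rw [mul_smul_comm]; exact Submodule.smul_mem _ _ hx

lemma lcs_mul_right {i : ℕ} (u : R) {x : R} (hx : x ∈ lcsIdeal K R i) :
    x * u ∈ lcsIdeal K R i := by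
  refine Submodule.span_induction (p := fun x _ => x * u ∈ lcsIdeal K R i) ?_ ?_ ?_ ?_ hx
  · rintro x ⟨a, b, l, hl, rfl⟩
    have : (a * l * b) * u = a * l * (b * u) := by noncomm_ring
    rw [this]; exact lcs_mem hl _ _
  · simp
  · intro x y _ _ hx hy
    rw [add_mul]; exact add_mem hx hy
  · intro r x _ hx
    rw [smul_mul_assoc]; exact Submodule.smul_mem _ _ hx

end Basics

section Key
variable {K : Type*} [CommRing K] {R : Type*} [Ring R] [Algebra K R]

/-- The 12-term Jennings-type identity. -/
lemma key_identity (a b c d m : R) :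
    (a*m - m*a) * (b*(c*d - d*c) - (c*d - d*c)*b) =
    (1:R) * ((a*b) * ((c)*m - m*(c)) - ((c)*m - m*(c))*(a*b)) * (d) - (a) * ((b) * ((c*d)*m - m*(c*d)) - ((c*d)*m - m*(c*d))*(b)) * (1:R) + (a*b) * ((c) * ((d)*m - m*(d)) - ((d)*m - m*(d))*(c)) * (1:R) - (1:R) * ((a*b*d) * ((c)*m - m*(c)) - ((c)*m - m*(c))*(a*b*d)) * (1:R) + (a) * ((b) * ((d*c)*m - m*(d*c)) - ((d*c)*m - m*(d*c))*(b)) * (1:R) + (1:R) * ((b) * ((a*c*d)*m - m*(a*c*d)) - ((a*c*d)*m - m*(a*c*d))*(b)) * (1:R) - (1:R) * ((b*a) * ((c)*m - m*(c)) - ((c)*m - m*(c))*(b*a)) * (d) - (1:R) * ((b) * ((a)*m - m*(a)) - ((a)*m - m*(a))*(b)) * (c*d) - (b*a) * ((c) * ((d)*m - m*(d)) - ((d)*m - m*(d))*(c)) * (1:R) - (1:R) * ((b) * ((a*d*c)*m - m*(a*d*c)) - ((a*d*c)*m - m*(a*d*c))*(b)) * (1:R) + (1:R) * ((b*a*d)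 * ((c)*m - m*(c)) - ((c)*m - m*(c))*(b*a*d)) * (1:R) + (1:R) * ((b) * ((a)*m - m*(a)) - ((a)*m - m*(a))*(b)) * (d*c) := by
  noncomm_ring

lemma lw {j : ℕ} (hj : 1 ≤ j) {l w : R} (hl : l ∈ lowerCentral K R (j + 1))
    (hw : w ∈ lowerCentral K R 3) : l * w ∈ lcsIdeal K R (j + 2) := by
  obtain ⟨jj, rfl⟩ : ∃ jj, j = jj + 1 := ⟨j - 1, by omega⟩
  refine Submodule.span_induction (p := fun l _ => l * w ∈ lcsIdeal K R (jj + 3)) ?_ ?_ ?_ ?_ hl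
  · rintro l ⟨a, m, hm, rfl⟩
    -- now induct on w ∈ L_3
    refine Submodule.span_induction
      (p := fun w _ => (a*m - m*a) * w ∈ lcsIdeal K R (jj + 3)) ?_ ?_ ?_ ?_ hw
    · rintro w ⟨b, y, hy, rfl⟩
      -- induct on y ∈ L_2
      refine Submodule.span_induction
        (p := fun y _ => (a*m - m*a) * (b*y - y*b) ∈ lcsIdeal K R (jj + 3)) ?_ ?_ ?_ ?_ hy
      · rintro y ⟨c, d, -, rfl⟩
        have H : ∀ p Y1 Y2 t : R,
            p * (Y1 * (Y2*m - m*Y2) - (Y2*m - m*Y2)*Y1) * t ∈ lcsIdeal K R (jj + 3) := by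
          intro p Y1 Y2 t
          exact lcs_mem (lc_succ_mem (by omega) (lc_succ_mem (by omega) hm Y2) Y1) p t
        rw [key_identity a b c d m]
        repeat' first | apply add_mem | apply sub_mem | apply H
      · simp
      · intro y z _ _ hy hz
        have : (a*m - m*a) * (b*(y+z) - (y+z)*b)
            = (a*m - m*a) * (b*y - y*b) + (a*m - m*a) * (b*z - z*b) := by noncomm_ring
        rw [this]; exact add_mem hy hz
      · intro r y _ hy
        have : (a*m - m*a) * (b*(r • y) - (r • y)*b) = r • ((a*m - m*a) * (b*y - y*b)) := by
          rw [mul_smul_comm, smul_mul_assoc, ← smul_sub, mul_smul_comm]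
        rw [this]; exact Submodule.smul_mem _ _ hy
    · simp
    · intro x y _ _ hx hy
      rw [mul_add]; exact add_mem hx hy
    · intro r x _ hx
      rw [mul_smul_comm]; exact Submodule.smul_mem _ _ hx
  · simp
  · intro x y _ _ hx hy
    rw [add_mul]; exact add_mem hx hy
  · intro r x _ hx
    rw [smul_mul_assoc]; exact Submodule.smul_mem _ _ hx

lemma KL {j : ℕ} (hj : 1 ≤ j) :
    lcsIdeal K R (j + 1) * lcsIdeal K R 3 ≤ lcsIdeal K R (j + 2) := by
  rw [Submodule.mul_le]
  intro x hx y hy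
  refine Submodule.span_induction (p := fun x _ => x * y ∈ lcsIdeal K R (j + 2)) ?_ ?_ ?_ ?_ hx
  · rintro x ⟨a, b, l, hl, rfl⟩
    refine Submodule.span_induction
      (p := fun y _ => (a * l * b) * y ∈ lcsIdeal K R (j + 2)) ?_ ?_ ?_ ?_ hy
    · rintro y ⟨a2, b2, w, hw, rfl⟩
      have hmid : l * (b * a2) * w ∈ lcsIdeal K R (j + 2) := by
        have e : l * (b * a2) * w = (b * a2) * (l * w) + (l * (b * a2) - (b * a2) * l) * w := by
          noncomm_ring
        rw [e]
        refine add_mem (lcs_mul_left _ (lw hj hl hw)) (lcs_mul_right _ ?_)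
        exact lc_le_lcs (lc_succ_mem' (by omega) hl (b * a2))
      have e2 : (a * l * b) * (a2 * w * b2) = a * (l * (b * a2) * w) * b2 := by noncomm_ring
      rw [e2]
      exact lcs_mul_right _ (lcs_mul_left _ hmid)
    · simp
    · intro u v _ _ hu hv
      rw [mul_add]; exact add_mem hu hv
    · intro r u _ hu
      rw [mul_smul_comm]; exact Submodule.smul_mem _ _ hu
  · simp
  · intro u v _ _ hu hv
    rw [add_mul]; exact add_mem hu hv
  · intro r u _ hu
    rw [smul_mul_assoc]; exact Submodule.smul_mem _ _ hu

lemma M3pow : ∀ r : ℕ, 1 ≤ r → (lcsIdeal K R 3) ^ r ≤ lcsIdeal K R (r + 2)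
  | 0, h => by omega
  | 1, _ => by rw [pow_one]
  | (r + 2), _ => by
      rw [pow_succ]
      calc (lcsIdeal K R 3) ^ (r+1) * lcsIdeal K R 3
          ≤ lcsIdeal K R (r + 3) * lcsIdeal K R 3 :=
            mul_le_mul' (M3pow (r+1) (by omega)) le_rfl
        _ ≤ lcsIdeal K R (r + 4) := KL (by omega)

end Key

section Base
set_option linter.unusedSectionVars false
variable {K : Type*} [Field K] [CharZero K] {n : ℕ}

local notation "A" => FreeAlgebra K (Fin n)

/-- squares of commutators lie in M_3 -/
lemma sq_mem (a x : A) : (a*x - x*a) * (a*x - x*a) ∈ lcsIdeal K A 3 := by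
  have key : (a*x - x*a) * (a*x - x*a) =
      (1:A) * (a*((a*x)*x - x*(a*x)) - ((a*x)*x - x*(a*x))*a) * (1:A)
      - (1:A) * (a*(a*x - x*a) - (a*x - x*a)*a) * x := by noncomm_ring
  rw [key]
  have h1 : (a*x)*x - x*(a*x) ∈ lowerCentral K A 2 :=
    lc_succ_mem (by omega) Submodule.mem_top (a*x)
  have h2 : a*x - x*a ∈ lowerCentral K A 2 :=
    lc_succ_mem (by omega) Submodule.mem_top a
  exact sub_mem (lcs_mem (lc_succ_mem (by omega) h1 a) 1 1)
    (lcs_mem (lc_succ_mem (by omega) h2 a) 1 x)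

/-- two commutators with the same second entry multiply into M_3 (char 0) -/
lemma pair_mem (p q x : A) : (p*x - x*p) * (q*x - x*q) ∈ lcsIdeal K A 3 := by
  have hsym : (p*x - x*p)*(q*x - x*q) + (q*x - x*q)*(p*x - x*p) ∈ lcsIdeal K A 3 := by
    have e : (p*x - x*p)*(q*x - x*q) + (q*x - x*q)*(p*x - x*p)
        = ((p+q)*x - x*(p+q))*((p+q)*x - x*(p+q))
          - (p*x - x*p)*(p*x - x*p) - (q*x - x*q)*(q*x - x*q) := by noncomm_ring
    rw [e]
    exact sub_mem (sub_mem (sq_mem (p+q) x) (sq_mem p x)) (sq_mem q x)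
  have hanti : (p*x - x*p)*(q*x - x*q) - (q*x - x*q)*(p*x - x*p) ∈ lcsIdeal K A 3 := by
    have hp2 : p*x - x*p ∈ lowerCentral K A 2 :=
      lc_succ_mem (by omega) Submodule.mem_top p
    exact lc_le_lcs (lc_succ_mem' (by omega) hp2 (q*x - x*q))
  have h2 : (2:K) • ((p*x - x*p)*(q*x - x*q)) ∈ lcsIdeal K A 3 := by
    have e : (2:K) • ((p*x - x*p)*(q*x - x*q))
        = ((p*x - x*p)*(q*x - x*q) + (q*x - x*q)*(p*x - x*p))
          + ((p*x - x*p)*(q*x - x*q) - (q*x - x*q)*(p*x - x*p)) := by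
      rw [two_smul]; noncomm_ring
    rw [e]; exact add_mem hsym hanti
  have := Submodule.smul_mem (lcsIdeal K A 3) ((2:K)⁻¹) h2
  rwa [smul_smul, inv_mul_cancel₀ two_ne_zero, one_smul] at this

/-- generator-anchored commutator -/
def cg (z : A × Fin n) : A := z.1 * FreeAlgebra.ι K z.2 - FreeAlgebra.ι K z.2 * z.1

def prodc (L : List (A × Fin n)) : A := (L.map cg).prod

lemma cg_mem_L2 (z : A × Fin n) : cg z ∈ lowerCentral K A 2 :=
  lc_succ_mem (by omega) Submodule.mem_top z.1

lemma swap_mem {y : A} (hy : y ∈ lowerCentral K A 2) (b : A) :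
    y * b - b * y ∈ lcsIdeal K A 3 :=
  lc_le_lcs (lc_succ_mem' (by omega) hy b)

lemma wcentral : ∀ (L : List (A × Fin n)) (b : A),
    prodc L * b - b * prodc L ∈ lcsIdeal K A 3
  | [], b => by simp [prodc]
  | z :: L', b => by
      have e : prodc (z :: L') = cg z * prodc L' := by simp [prodc]
      rw [e]
      have e2 : (cg z * prodc L') * b - b * (cg z * prodc L')
          = cg z * (prodc L' * b - b * prodc L') + (cg z * b - b * cg z) * prodc L' := by
        noncomm_ring
      rw [e2]
      exact add_mem (lcs_mul_left _ (wcentral L' b))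
        (lcs_mul_right _ (swap_mem (cg_mem_L2 z) b))

lemma dupkill : ∀ (L : List (A × Fin n)) (q : A) (j : Fin n),
    j ∈ L.map Prod.snd → prodc L * cg (q, j) ∈ lcsIdeal K A 3
  | [], q, j, h => by simp at h
  | z :: L', q, j, h => by
      have e : prodc (z :: L') = cg z * prodc L' := by simp [prodc]
      rcases (by simpa using h : j = z.2 ∨ j ∈ L'.map Prod.snd) with h1 | h1
      · subst h1
        have e2 : prodc (z :: L') * cg (q, z.2)
            = (cg z * cg (q, z.2)) * prodc L'
              + cg z * (prodc L' * cg (q, z.2) - cg (q, z.2) * prodc L') := by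
          rw [e]; noncomm_ring
        rw [e2]
        refine add_mem (lcs_mul_right _ ?_) (lcs_mul_left _ (wcentral L' _))
        exact pair_mem z.1 q (FreeAlgebra.ι K z.2)
      · have e2 : prodc (z :: L') * cg (q, j) = cg z * (prodc L' * cg (q, j)) := by
          rw [e]; noncomm_ring
        rw [e2]
        exact lcs_mul_left _ (dupkill L' q j h1)

/-- filtration: M_3 plus span of (coefficient · product of r distinct-index commutators) -/
def FF (K : Type*) [Field K] (n r : ℕ) : Submodule K (FreeAlgebra K (Fin n)) :=
  lcsIdeal K (FreeAlgebra K (Fin n)) 3 ⊔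
    Submodule.span K {x | ∃ a : FreeAlgebra K (Fin n), ∃ L : List (FreeAlgebra K (Fin n) × Fin n),
      (L.map Prod.snd).Nodup ∧ L.length = r ∧ x = a * prodc L}

lemma M3_le_FF (r : ℕ) : lcsIdeal K A 3 ≤ FF K n r := le_sup_left

lemma FF_mul_left {r : ℕ} (u : A) {x : A} (hx : x ∈ FF K n r) : u * x ∈ FF K n r := by
  obtain ⟨y, hy, z, hz, rfl⟩ := Submodule.mem_sup.mp hx
  rw [mul_add]
  refine add_mem (M3_le_FF r (lcs_mul_left u hy)) ?_
  refine Submodule.mem_sup_right ?_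
  refine Submodule.span_induction (p := fun z _ => u * z ∈ Submodule.span K _) ?_ ?_ ?_ ?_ hz
  · rintro z ⟨a, L, hnd, hlen, rfl⟩
    refine Submodule.subset_span ⟨u * a, L, hnd, hlen, by rw [mul_assoc]⟩
  · simp
  · intro x y _ _ hx hy; rw [mul_add]; exact add_mem hx hy
  · intro r x _ hx; rw [mul_smul_comm]; exact Submodule.smul_mem _ _ hx

lemma FF_mul_right {r : ℕ} (u : A) {x : A} (hx : x ∈ FF K n r) : x * u ∈ FF K n r := by
  obtain ⟨y, hy, z, hz, rfl⟩ := Submodule.mem_sup.mp hx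
  rw [add_mul]
  refine add_mem (M3_le_FF r (lcs_mul_right u hy)) ?_
  refine Submodule.span_induction (p := fun z _ => z * u ∈ FF K n r) ?_ ?_ ?_ ?_ hz
  · rintro z ⟨a, L, hnd, hlen, rfl⟩
    have e : (a * prodc L) * u = (a * u) * prodc L + a * (prodc L * u - u * prodc L) := by
      noncomm_ring
    rw [e]
    refine add_mem (Submodule.mem_sup_right (Submodule.subset_span ⟨a * u, L, hnd, hlen, rfl⟩)) ?_
    exact M3_le_FF r (lcs_mul_left a (wcentral L u))
  · simp
  · intro x y _ _ hx hy; rw [add_mul]; exact add_mem hx hy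
  · intro r x _ hx; rw [smul_mul_assoc]; exact Submodule.smul_mem _ _ hx

/-- every commutator lies in FF 1 -/
lemma red (p q : A) : p * q - q * p ∈ FF K n 1 := by
  induction q using FreeAlgebra.induction with
  | grade0 r =>
      have e : p * algebraMap K A r - algebraMap K A r * p = 0 := by
        rw [Algebra.commutes]; exact sub_self _
      rw [e]; exact zero_mem _
  | grade1 i =>
      refine Submodule.mem_sup_right (Submodule.subset_span ⟨1, [(p, i)], by simp, by simp, ?_⟩)
      simp [prodc, cg]
  | mul q1 q2 h1 h2 =>
      have e : p * (q1 * q2) - (q1 * q2) * p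
          = (p * q1 - q1 * p) * q2 + q1 * (p * q2 - q2 * p) := by noncomm_ring
      rw [e]
      exact add_mem (FF_mul_right q2 h1) (FF_mul_left q1 h2)
  | add q1 q2 h1 h2 =>
      have e : p * (q1 + q2) - (q1 + q2) * p
          = (p * q1 - q1 * p) + (p * q2 - q2 * p) := by noncomm_ring
      rw [e]
      exact add_mem h1 h2

lemma M2_le_FF1 : lcsIdeal K A 2 ≤ FF K n 1 := by
  rw [lcsIdeal, Submodule.span_le]
  rintro x ⟨a, b, l, hl, rfl⟩
  refine Submodule.span_induction (p := fun l _ => a * l * b ∈ FF K n 1) ?_ ?_ ?_ ?_ hl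
  · rintro l ⟨u, v, -, rfl⟩
    exact FF_mul_right b (FF_mul_left a (red u v))
  · simp
  · intro x y _ _ hx hy
    have e : a * (x + y) * b = a * x * b + a * y * b := by noncomm_ring
    rw [e]; exact add_mem hx hy
  · intro r x _ hx
    have e : a * (r • x) * b = r • (a * x * b) := by
      rw [mul_smul_comm, smul_mul_assoc]
    rw [e]; exact Submodule.smul_mem _ _ hx

lemma FF_step (r : ℕ) : FF K n r * FF K n 1 ≤ FF K n (r + 1) := by
  rw [Submodule.mul_le]
  intro x hx y hy
  obtain ⟨x3, hx3, xs, hxs, rfl⟩ := Submodule.mem_sup.mp hx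
  rw [add_mul]
  refine add_mem (M3_le_FF (r+1) (lcs_mul_right y hx3)) ?_
  refine Submodule.span_induction (p := fun xs _ => xs * y ∈ FF K n (r + 1)) ?_ ?_ ?_ ?_ hxs
  · rintro xs ⟨a, L, hnd, hlen, rfl⟩
    obtain ⟨y3, hy3, ys, hys, rfl⟩ := Submodule.mem_sup.mp hy
    rw [mul_add]
    refine add_mem (M3_le_FF (r+1) (lcs_mul_left _ hy3)) ?_
    refine Submodule.span_induction
      (p := fun ys _ => (a * prodc L) * ys ∈ FF K n (r + 1)) ?_ ?_ ?_ ?_ hys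
    · rintro ys ⟨b, L1, hnd1, hlen1, rfl⟩
      obtain ⟨z, rfl⟩ := List.length_eq_one_iff.mp hlen1
      have e : (a * prodc L) * (b * prodc [z])
          = (a * b) * (prodc L * prodc [z])
            + a * (prodc L * b - b * prodc L) * prodc [z] := by noncomm_ring
      rw [e]
      refine add_mem ?_
        (M3_le_FF (r+1) (lcs_mul_right _ (lcs_mul_left a (wcentral L b))))
      have eprod : prodc L * prodc [z] = prodc (L ++ [z]) := by
        simp [prodc]
      by_cases hz : z.2 ∈ L.map Prod.snd
      · have : prodc L * prodc [z] ∈ lcsIdeal K A 3 := by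
          have e1 : prodc [z] = cg (z.1, z.2) := by simp [prodc]
          rw [e1]
          exact dupkill L z.1 z.2 hz
        exact M3_le_FF (r+1) (lcs_mul_left _ this)
      · rw [eprod]
        refine Submodule.mem_sup_right (Submodule.subset_span ⟨a * b, L ++ [z], ?_, ?_, rfl⟩)
        · simp only [List.map_append]
          rw [List.nodup_append]
          exact ⟨hnd, by simp, by
            intro u hu v hv huv
            simp only [List.map_cons, List.map_nil, List.mem_singleton] at hv
            subst hv; subst huv; exact hz hu⟩
        · simp [hlen]
    · simp
    · intro u v _ _ hu hv; rw [mul_add]; exact add_mem hu hv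
    · intro c u _ hu; rw [mul_smul_comm]; exact Submodule.smul_mem _ _ hu
  · simp
  · intro u v _ _ hu hv; rw [add_mul]; exact add_mem hu hv
  · intro c u _ hu; rw [smul_mul_assoc]; exact Submodule.smul_mem _ _ hu

lemma M2_pow_le_FF : ∀ r : ℕ, 1 ≤ r → lcsIdeal K A 2 ^ r ≤ FF K n r
  | 0, h => by omega
  | 1, _ => by rw [pow_one]; exact M2_le_FF1
  | (r + 2), _ => by
      rw [pow_succ]
      calc lcsIdeal K A 2 ^ (r+1) * lcsIdeal K A 2
          ≤ FF K n (r+1) * FF K n 1 :=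
            mul_le_mul' (M2_pow_le_FF (r+1) (by omega)) M2_le_FF1
        _ ≤ FF K n (r+2) := FF_step (r+1)

lemma FF_top_le_M3 : FF K n (n + 1) ≤ lcsIdeal K A 3 := by
  refine sup_le le_rfl ?_
  rw [Submodule.span_le]
  rintro x ⟨a, L, hnd, hlen, rfl⟩
  exfalso
  have h1 := hnd.length_le_card
  simp [hlen, Fintype.card_fin] at h1

lemma base_case : lcsIdeal K A 2 ^ (n + 1) ≤ lcsIdeal K A 3 :=
  le_trans (M2_pow_le_FF (n+1) (by omega)) FF_top_le_M3

end Base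

section Final
variable {K : Type*} [CommRing K] {R : Type*} [Ring R] [Algebra K R]

lemma sub_pow_mono {P Q : Submodule K R} (h : P ≤ Q) : ∀ r : ℕ, P ^ r ≤ Q ^ r
  | 0 => le_rfl
  | r + 1 => by
      rw [pow_succ, pow_succ]
      exact mul_le_mul' (sub_pow_mono h r) h

end Final

/-- Jennings: for every `n ≥ 1` and `k ≥ 2` there exists `m ≥ 1` with
`(M_2(A_n))^m ⊆ M_k(A_n)` (powers taken as products of two-sided ideals). -/
theorem jennings_power_containment
    (K : Type*) [Field K] [CharZero K]
    (n : ℕ) (hn : 1 ≤ n) (k : ℕ) (hk : 2 ≤ k) :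
    ∃ m : ℕ, 1 ≤ m ∧
      lcsIdeal K (FreeAlgebra K (Fin n)) 2 ^ m ≤ lcsIdeal K (FreeAlgebra K (Fin n)) k := by
  by_cases hk2 : k = 2
  · exact ⟨1, le_rfl, by rw [hk2, pow_one]⟩
  · obtain ⟨kk, rfl⟩ : ∃ kk, k = kk + 3 := ⟨k - 3, by omega⟩
    refine ⟨(n + 1) * (kk + 1),
      Nat.one_le_iff_ne_zero.mpr (Nat.mul_ne_zero (by omega) (by omega)), ?_⟩
    rw [pow_mul]
    calc (lcsIdeal K (FreeAlgebra K (Fin n)) 2 ^ (n + 1)) ^ (kk + 1)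
        ≤ (lcsIdeal K (FreeAlgebra K (Fin n)) 3) ^ (kk + 1) := sub_pow_mono base_case _
      _ ≤ lcsIdeal K (FreeAlgebra K (Fin n)) (kk + 3) := M3pow (kk + 1) (by omega)
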